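/- Let ρ : ℝ³ → ℝ be measurable with ρ ≥ 0, m := ∫_{ℝ³} ρ(y) dy < ∞ and K := ∫_{ℝ³} ρ(y)^{5/3} dy < ∞. Then for every R > 0, the potential energy satisfies (1/2) ∫_{ℝ³} ∫_{ℝ³} ρ(x) ρ(y)/|x−y| dy dx ≤ (1/2) m ( m/R + (8π)^{2/5} R^{1/5} K^{3/5} ). -/

import Mathlib

open MeasureTheory Real

open Set Filter

noncomputable section

abbrev E3 : Type := EuclideanSpace ℝ (Fin 3)

lemma vol_cB (r : ℝ) (hr : 0 ≤ r) :
    volume (Metric.closedBall (0 : E3) r) = ENNReal.ofReal (4 * π / 3 * r ^ 3) := by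
  rw [EuclideanSpace.volume_closedBall]
  have hG : Real.Gamma ((Fintype.card (Fin 3) : ℝ) / 2 + 1) = 3 / 4 * Real.sqrt π := by
    rw [Fintype.card_fin]
    push_cast
    have h1 : (3 : ℝ) / 2 + 1 = (1/2 + 1) + 1 := by norm_num
    rw [h1, Real.Gamma_add_one (by norm_num), Real.Gamma_add_one (by norm_num),
      Real.Gamma_one_half_eq]
    ring
  rw [hG, Fintype.card_fin, ← ENNReal.ofReal_pow hr, ← ENNReal.ofReal_mul (by positivity)]
  congr 1
  have hs : Real.sqrt π ^ 3 = π * Real.sqrt π := by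
    rw [pow_succ, sq_sqrt pi_nonneg]
  rw [hs]
  have hsne : Real.sqrt π ≠ 0 := by positivity
  field_simp

lemma ball_int (R : ℝ) (hR : 0 < R) :
    ∫⁻ z in Metric.closedBall (0 : E3) R, ENNReal.ofReal (‖z‖ ^ (-(5 : ℝ)/2))
      ≤ ENNReal.ofReal (8 * π * R ^ ((1 : ℝ)/2)) := by
  set μ := volume.restrict (Metric.closedBall (0 : E3) R) with hμ
  have f_nn : 0 ≤ᵐ[μ] fun z : E3 => ‖z‖ ^ (-(5 : ℝ)/2) :=
    Eventually.of_forall fun z => Real.rpow_nonneg (norm_nonneg _) _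
  have f_mble : AEMeasurable (fun z : E3 => ‖z‖ ^ (-(5 : ℝ)/2)) μ := by fun_prop
  rw [lintegral_eq_lintegral_meas_le μ f_nn f_mble]
  set a := R ^ (-(5:ℝ)/2) with ha
  have ha0 : 0 < a := Real.rpow_pos_of_pos hR _
  have hsub : ∀ t : ℝ, 0 < t →
      {z : E3 | t ≤ ‖z‖ ^ (-(5 : ℝ)/2)} ⊆ Metric.closedBall 0 (t ^ (-(2:ℝ)/5)) := by
    intro t ht z hz
    simp only [mem_setOf_eq] at hz
    have hz0 : 0 < ‖z‖ := by
      by_contra h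
      push_neg at h
      have : ‖z‖ = 0 := le_antisymm h (norm_nonneg _)
      rw [this, Real.zero_rpow (by norm_num)] at hz
      linarith
    have h2 := Real.rpow_le_rpow_of_nonpos ht hz (by norm_num : (-(2:ℝ)/5) ≤ 0)
    rw [← Real.rpow_mul (norm_nonneg z)] at h2
    norm_num at h2
    rw [Metric.mem_closedBall, dist_zero_right]
    linarith
  have key : ∀ t : ℝ, 0 < t →
      μ {z : E3 | t ≤ ‖z‖ ^ (-(5 : ℝ)/2)} ≤ ENNReal.ofReal (4 * π / 3 * (t ^ (-(2:ℝ)/5)) ^ 3) := by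
    intro t ht
    calc μ {z : E3 | t ≤ ‖z‖ ^ (-(5 : ℝ)/2)}
        ≤ volume {z : E3 | t ≤ ‖z‖ ^ (-(5 : ℝ)/2)} := Measure.restrict_le_self _
      _ ≤ volume (Metric.closedBall (0:E3) (t ^ (-(2:ℝ)/5))) := measure_mono (hsub t ht)
      _ = _ := vol_cB _ (Real.rpow_nonneg ht.le _)
  have keyR : ∀ t : ℝ,
      μ {z : E3 | t ≤ ‖z‖ ^ (-(5 : ℝ)/2)} ≤ ENNReal.ofReal (4 * π / 3 * R ^ 3) := by
    intro t
    calc μ {z : E3 | t ≤ ‖z‖ ^ (-(5 : ℝ)/2)} ≤ μ univ := measure_mono (subset_univ _)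
      _ ≤ volume (Metric.closedBall (0:E3) R) := by
          rw [hμ, Measure.restrict_apply_univ]
      _ = _ := vol_cB _ hR.le
  have hsplit : (∫⁻ t in Ioi (0:ℝ), μ {z : E3 | t ≤ ‖z‖ ^ (-(5 : ℝ)/2)})
      ≤ (∫⁻ t in Ioc 0 a, μ {z : E3 | t ≤ ‖z‖ ^ (-(5 : ℝ)/2)})
        + ∫⁻ t in Ioi a, μ {z : E3 | t ≤ ‖z‖ ^ (-(5 : ℝ)/2)} := by
    rw [← Ioc_union_Ioi_eq_Ioi ha0.le]
    exact lintegral_union_le _ _ _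
  refine le_trans hsplit ?_
  have h1 : (∫⁻ t in Ioc 0 a, μ {z : E3 | t ≤ ‖z‖ ^ (-(5 : ℝ)/2)})
      ≤ ENNReal.ofReal (4 * π / 3 * R ^ ((1:ℝ)/2)) := by
    calc (∫⁻ t in Ioc 0 a, μ {z : E3 | t ≤ ‖z‖ ^ (-(5 : ℝ)/2)})
        ≤ ∫⁻ _ in Ioc (0:ℝ) a, ENNReal.ofReal (4 * π / 3 * R ^ 3) :=
          lintegral_mono fun t => keyR t
      _ = ENNReal.ofReal (4 * π / 3 * R ^ 3) * volume (Ioc (0:ℝ) a) := by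
          rw [setLIntegral_const]
      _ = ENNReal.ofReal (4 * π / 3 * R ^ 3 * a) := by
          rw [Real.volume_Ioc, sub_zero, ← ENNReal.ofReal_mul (by positivity)]
      _ = _ := by
          congr 1
          rw [ha, ← Real.rpow_natCast R 3, mul_assoc, ← Real.rpow_add hR]
          norm_num
  have h2 : (∫⁻ t in Ioi a, μ {z : E3 | t ≤ ‖z‖ ^ (-(5 : ℝ)/2)})
      ≤ ENNReal.ofReal (20 * π / 3 * R ^ ((1:ℝ)/2)) := by
    have hb : ∀ t ∈ Ioi a, μ {z : E3 | t ≤ ‖z‖ ^ (-(5 : ℝ)/2)}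
        ≤ ENNReal.ofReal (4 * π / 3 * t ^ (-(6:ℝ)/5)) := by
      intro t ht
      have ht0 : 0 < t := lt_trans ha0 ht
      refine le_trans (key t ht0) (le_of_eq ?_)
      congr 1
      rw [← Real.rpow_natCast (t ^ (-(2:ℝ)/5)) 3, ← Real.rpow_mul ht0.le]
      norm_num
    calc (∫⁻ t in Ioi a, μ {z : E3 | t ≤ ‖z‖ ^ (-(5 : ℝ)/2)})
        ≤ ∫⁻ t in Ioi a, ENNReal.ofReal (4 * π / 3 * t ^ (-(6:ℝ)/5)) := by
          refine setLIntegral_mono' measurableSet_Ioi hb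
      _ = ENNReal.ofReal (∫ t in Ioi a, 4 * π / 3 * t ^ (-(6:ℝ)/5)) := by
          rw [← ofReal_integral_eq_lintegral_ofReal]
          · exact (integrableOn_Ioi_rpow_of_lt (by norm_num) ha0).const_mul _
          · exact (ae_restrict_iff' measurableSet_Ioi).2
              (Eventually.of_forall fun t ht => by
                have : (0:ℝ) < t := lt_trans ha0 ht
                positivity)
      _ = _ := by
          congr 1
          rw [integral_const_mul, integral_Ioi_rpow_of_lt (by norm_num) ha0]
          rw [ha, ← Real.rpow_mul hR.le]
          norm_num
          ring
  calc _ ≤ ENNReal.ofReal (4 * π / 3 * R ^ ((1:ℝ)/2)) + ENNReal.ofReal (20 * π / 3 * R ^ ((1:ℝ)/2)) :=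
        add_le_add h1 h2
    _ = _ := by
        rw [← ENNReal.ofReal_add (by positivity) (by positivity)]
        congr 1
        ring

lemma inner_bound (ρ : E3 → ℝ) (hmeas : Measurable ρ) (hpos : ∀ y, 0 ≤ ρ y)
    (hint : Integrable ρ) (hint53 : Integrable (fun y : E3 => ρ y ^ ((5 : ℝ) / 3)))
    (R : ℝ) (hR : 0 < R) (x : E3) :
    ∫ y : E3, ρ y / ‖x - y‖
      ≤ (∫ y : E3, ρ y) / R +
        (8 * π) ^ ((2 : ℝ) / 5) * R ^ ((1 : ℝ) / 5) *
          (∫ y : E3, ρ y ^ ((5 : ℝ) / 3)) ^ ((3 : ℝ) / 5) := by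
  set m := ∫ y : E3, ρ y with hm
  set K := ∫ y : E3, ρ y ^ ((5 : ℝ) / 3) with hK
  have hm0 : 0 ≤ m := integral_nonneg hpos
  have hK0 : 0 ≤ K := integral_nonneg fun y => Real.rpow_nonneg (hpos y) _
  have h8π : (0:ℝ) ≤ (8 * π) ^ ((2 : ℝ) / 5) := Real.rpow_nonneg (by positivity) _
  have hK35 : (0:ℝ) ≤ K ^ ((3:ℝ)/5) := Real.rpow_nonneg hK0 _
  have hR15 : (0:ℝ) ≤ R ^ ((1:ℝ)/5) := Real.rpow_nonneg hR.le _
  have hC0 : 0 ≤ m / R + (8 * π) ^ ((2 : ℝ) / 5) * R ^ ((1 : ℝ) / 5) * K ^ ((3 : ℝ) / 5) := by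
    positivity
  set B := Metric.closedBall x R with hB
  have hρm : ∫⁻ y, ENNReal.ofReal (ρ y) = ENNReal.ofReal m :=
    (ofReal_integral_eq_lintegral_ofReal hint (Eventually.of_forall hpos)).symm
  have hρK : ∫⁻ y, ENNReal.ofReal (ρ y ^ ((5:ℝ)/3)) = ENNReal.ofReal K :=
    (ofReal_integral_eq_lintegral_ofReal hint53
      (Eventually.of_forall fun y => Real.rpow_nonneg (hpos y) _)).symm
  have hne : ∀ᵐ (y : E3), y ≠ x := by
    rw [ae_iff]
    simpa using measure_singleton x
  -- near-field bound
  have hnear : ∫⁻ y in B, ENNReal.ofReal (ρ y) * (ENNReal.ofReal ‖x - y‖)⁻¹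
      ≤ ENNReal.ofReal ((8 * π) ^ ((2:ℝ)/5) * R ^ ((1:ℝ)/5) * K ^ ((3:ℝ)/5)) := by
    have hpq : ((5:ℝ)/3).HolderConjugate ((5:ℝ)/2) := Real.holderConjugate_iff.mpr ⟨by norm_num, by norm_num⟩
    have hf : AEMeasurable (fun y : E3 => ENNReal.ofReal (ρ y)) (volume.restrict B) := by
      fun_prop
    have hg : AEMeasurable (fun y : E3 => (ENNReal.ofReal ‖x - y‖)⁻¹) (volume.restrict B) := by
      fun_prop
    have hold := ENNReal.lintegral_mul_le_Lp_mul_Lq (volume.restrict B) hpq hf hg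
    simp only [Pi.mul_apply] at hold
    have hfac1 : (∫⁻ y in B, ENNReal.ofReal (ρ y) ^ ((5:ℝ)/3)) ^ (1/((5:ℝ)/3))
        ≤ ENNReal.ofReal (K ^ ((3:ℝ)/5)) := by
      have hle : (∫⁻ y in B, ENNReal.ofReal (ρ y) ^ ((5:ℝ)/3)) ≤ ENNReal.ofReal K := by
        calc (∫⁻ y in B, ENNReal.ofReal (ρ y) ^ ((5:ℝ)/3))
            ≤ ∫⁻ y, ENNReal.ofReal (ρ y) ^ ((5:ℝ)/3) := setLIntegral_le_lintegral _ _
          _ = ∫⁻ y, ENNReal.ofReal (ρ y ^ ((5:ℝ)/3)) :=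
              lintegral_congr fun y => ENNReal.ofReal_rpow_of_nonneg (hpos y) (by norm_num)
          _ = ENNReal.ofReal K := hρK
      calc (∫⁻ y in B, ENNReal.ofReal (ρ y) ^ ((5:ℝ)/3)) ^ (1/((5:ℝ)/3))
          ≤ (ENNReal.ofReal K) ^ (1/((5:ℝ)/3)) := ENNReal.rpow_le_rpow hle (by norm_num)
        _ = ENNReal.ofReal (K ^ ((3:ℝ)/5)) := by
            rw [show (1/((5:ℝ)/3)) = (3:ℝ)/5 by norm_num]
            exact ENNReal.ofReal_rpow_of_nonneg hK0 (by norm_num)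
    have hfac2 : (∫⁻ y in B, ((ENNReal.ofReal ‖x - y‖)⁻¹) ^ ((5:ℝ)/2)) ^ (1/((5:ℝ)/2))
        ≤ ENNReal.ofReal ((8*π) ^ ((2:ℝ)/5) * R ^ ((1:ℝ)/5)) := by
      have hpt : (∫⁻ y in B, ((ENNReal.ofReal ‖x - y‖)⁻¹) ^ ((5:ℝ)/2))
          = ∫⁻ y in B, ENNReal.ofReal (‖x - y‖ ^ (-(5:ℝ)/2)) := by
        refine lintegral_congr_ae ?_
        filter_upwards [hne.filter_mono (ae_mono Measure.restrict_le_self)] with y hy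
        have h0 : 0 < ‖x - y‖ := by
          rw [norm_pos_iff, sub_ne_zero]
          exact fun h => hy h.symm
        rw [ENNReal.inv_rpow, ← ENNReal.rpow_neg, ENNReal.ofReal_rpow_of_pos h0]
        norm_num
      have hmem : ∀ y : E3, (x - y ∈ Metric.closedBall (0:E3) R) ↔ y ∈ B := by
        intro y
        simp only [Metric.mem_closedBall, dist_zero_right, norm_sub_rev x y]
        rw [hB, Metric.mem_closedBall, dist_eq_norm]
      have hFm : Measurable (fun z : E3 => (Metric.closedBall (0:E3) R).indicator
          (fun z => ENNReal.ofReal (‖z‖ ^ (-(5:ℝ)/2))) z) :=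
        Measurable.indicator (by fun_prop) measurableSet_closedBall
      have htrans : (∫⁻ y in B, ENNReal.ofReal (‖x - y‖ ^ (-(5:ℝ)/2)))
          = ∫⁻ z in Metric.closedBall (0:E3) R, ENNReal.ofReal (‖z‖ ^ (-(5:ℝ)/2)) := by
        calc (∫⁻ y in B, ENNReal.ofReal (‖x - y‖ ^ (-(5:ℝ)/2)))
            = ∫⁻ y, (Metric.closedBall (0:E3) R).indicator
                (fun z => ENNReal.ofReal (‖z‖ ^ (-(5:ℝ)/2))) (x - y) := by
              rw [← lintegral_indicator measurableSet_closedBall]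
              refine lintegral_congr fun y => ?_
              by_cases hy : y ∈ B
              · rw [indicator_of_mem hy, indicator_of_mem ((hmem y).2 hy)]
              · rw [indicator_of_notMem hy, indicator_of_notMem (fun h => hy ((hmem y).1 h))]
          _ = ∫⁻ z, (Metric.closedBall (0:E3) R).indicator
                (fun z => ENNReal.ofReal (‖z‖ ^ (-(5:ℝ)/2))) z :=
              (Measure.measurePreserving_sub_left volume x).lintegral_comp hFm
          _ = _ := lintegral_indicator measurableSet_closedBall _
      rw [hpt, htrans]
      calc (∫⁻ z in Metric.closedBall (0:E3) R, ENNReal.ofReal (‖z‖ ^ (-(5:ℝ)/2))) ^ (1/((5:ℝ)/2))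
          ≤ (ENNReal.ofReal (8 * π * R ^ ((1:ℝ)/2))) ^ (1/((5:ℝ)/2)) :=
            ENNReal.rpow_le_rpow (ball_int R hR) (by norm_num)
        _ = ENNReal.ofReal ((8 * π * R ^ ((1:ℝ)/2)) ^ ((2:ℝ)/5)) := by
            rw [show (1/((5:ℝ)/2)) = (2:ℝ)/5 by norm_num]
            exact ENNReal.ofReal_rpow_of_nonneg (by positivity) (by norm_num)
        _ = ENNReal.ofReal ((8*π) ^ ((2:ℝ)/5) * R ^ ((1:ℝ)/5)) := by
            congr 1
            rw [Real.mul_rpow (by positivity) (Real.rpow_nonneg hR.le _),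
              ← Real.rpow_mul hR.le]
            norm_num
    calc ∫⁻ y in B, ENNReal.ofReal (ρ y) * (ENNReal.ofReal ‖x - y‖)⁻¹
        ≤ (∫⁻ y in B, ENNReal.ofReal (ρ y) ^ ((5:ℝ)/3)) ^ (1/((5:ℝ)/3)) *
            (∫⁻ y in B, ((ENNReal.ofReal ‖x - y‖)⁻¹) ^ ((5:ℝ)/2)) ^ (1/((5:ℝ)/2)) := hold
      _ ≤ ENNReal.ofReal (K ^ ((3:ℝ)/5)) * ENNReal.ofReal ((8*π) ^ ((2:ℝ)/5) * R ^ ((1:ℝ)/5)) :=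
          mul_le_mul' hfac1 hfac2
      _ = _ := by
          rw [← ENNReal.ofReal_mul hK35]
          congr 1
          ring
  -- far-field bound
  have hfar : ∫⁻ y in Bᶜ, ENNReal.ofReal (ρ y) * (ENNReal.ofReal ‖x - y‖)⁻¹
      ≤ ENNReal.ofReal (m / R) := by
    calc ∫⁻ y in Bᶜ, ENNReal.ofReal (ρ y) * (ENNReal.ofReal ‖x - y‖)⁻¹
        ≤ ∫⁻ y in Bᶜ, ENNReal.ofReal (ρ y) * (ENNReal.ofReal R)⁻¹ := by
          refine setLIntegral_mono' measurableSet_closedBall.compl ?_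
          intro y hy
          have hyR : R < ‖x - y‖ := by
            simp only [hB, mem_compl_iff, Metric.mem_closedBall, not_le, dist_eq_norm] at hy
            calc R < ‖y - x‖ := hy
              _ = ‖x - y‖ := norm_sub_rev y x
          exact mul_le_mul_right (ENNReal.inv_le_inv.mpr (ENNReal.ofReal_le_ofReal hyR.le)) _
      _ ≤ ∫⁻ y, ENNReal.ofReal (ρ y) * (ENNReal.ofReal R)⁻¹ := setLIntegral_le_lintegral _ _
      _ = (∫⁻ y, ENNReal.ofReal (ρ y)) * (ENNReal.ofReal R)⁻¹ :=
          lintegral_mul_const' _ _ (ENNReal.inv_ne_top.mpr (ENNReal.ofReal_pos.mpr hR).ne')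
      _ = ENNReal.ofReal m * (ENNReal.ofReal R)⁻¹ := by rw [hρm]
      _ = ENNReal.ofReal (m / R) := by
          rw [ENNReal.ofReal_div_of_pos hR, ENNReal.div_eq_inv_mul, mul_comm]
  -- combine
  have main : ∫⁻ y, ENNReal.ofReal (ρ y) * (ENNReal.ofReal ‖x - y‖)⁻¹
      ≤ ENNReal.ofReal (m / R + (8 * π) ^ ((2:ℝ)/5) * R ^ ((1:ℝ)/5) * K ^ ((3:ℝ)/5)) := by
    rw [← lintegral_add_compl (fun y => ENNReal.ofReal (ρ y) * (ENNReal.ofReal ‖x - y‖)⁻¹)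
      (measurableSet_closedBall : MeasurableSet B)]
    calc (∫⁻ y in B, ENNReal.ofReal (ρ y) * (ENNReal.ofReal ‖x - y‖)⁻¹)
          + ∫⁻ y in Bᶜ, ENNReal.ofReal (ρ y) * (ENNReal.ofReal ‖x - y‖)⁻¹
        ≤ ENNReal.ofReal ((8 * π) ^ ((2:ℝ)/5) * R ^ ((1:ℝ)/5) * K ^ ((3:ℝ)/5))
          + ENNReal.ofReal (m / R) := add_le_add hnear hfar
      _ = _ := by
          rw [← ENNReal.ofReal_add (by positivity) (by positivity)]
          congr 1
          ring
  -- pass to real integrals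
  have hsm : AEStronglyMeasurable (fun y : E3 => ρ y / ‖x - y‖) volume := by
    have : Measurable (fun y : E3 => ρ y / ‖x - y‖) :=
      hmeas.div (measurable_norm.comp (measurable_const.sub measurable_id))
    exact this.aestronglyMeasurable
  have hfin : ∫ y, ρ y / ‖x - y‖ = (∫⁻ y, ENNReal.ofReal (ρ y / ‖x - y‖)).toReal := by
    rw [integral_eq_lintegral_of_nonneg_ae
      (Eventually.of_forall fun y => div_nonneg (hpos y) (norm_nonneg _)) hsm]
  have hcong : (∫⁻ y, ENNReal.ofReal (ρ y / ‖x - y‖))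
      = ∫⁻ y, ENNReal.ofReal (ρ y) * (ENNReal.ofReal ‖x - y‖)⁻¹ := by
    refine lintegral_congr_ae ?_
    filter_upwards [hne] with y hy
    have h0 : 0 < ‖x - y‖ := by
      rw [norm_pos_iff, sub_ne_zero]
      exact fun h => hy h.symm
    rw [div_eq_mul_inv, ENNReal.ofReal_mul (hpos y), ENNReal.ofReal_inv_of_pos h0]
  rw [hfin, hcong]
  exact ENNReal.toReal_le_of_le_ofReal hC0 main


/-- bound on the gravitational potential energy of a nonnegative
density, obtained by splitting the inner Newtonian integral at radius `R`. -/
theorem potential_energy_split_bound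
    (ρ : E3 → ℝ) (hmeas : Measurable ρ) (hpos : ∀ y, 0 ≤ ρ y)
    (hint : Integrable ρ)
    (hint53 : Integrable (fun y : E3 => ρ y ^ ((5 : ℝ) / 3))) :
    ∀ R : ℝ, 0 < R →
      (1 / 2) * ∫ x : E3, ρ x * ∫ y : E3, ρ y / ‖x - y‖
        ≤ (1 / 2) * (∫ y : E3, ρ y) *
            ((∫ y : E3, ρ y) / R +
              (8 * π) ^ ((2 : ℝ) / 5) * R ^ ((1 : ℝ) / 5) *
                (∫ y : E3, ρ y ^ ((5 : ℝ) / 3)) ^ ((3 : ℝ) / 5)) := by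
  intro R hR
  set C := (∫ y : E3, ρ y) / R +
      (8 * π) ^ ((2 : ℝ) / 5) * R ^ ((1 : ℝ) / 5) *
        (∫ y : E3, ρ y ^ ((5 : ℝ) / 3)) ^ ((3 : ℝ) / 5) with hC
  have hinner_nonneg : ∀ x : E3, 0 ≤ ∫ y : E3, ρ y / ‖x - y‖ :=
    fun x => integral_nonneg fun y => div_nonneg (hpos y) (norm_nonneg _)
  have hbound : (∫ x : E3, ρ x * ∫ y : E3, ρ y / ‖x - y‖) ≤ (∫ y : E3, ρ y) * C := by
    calc (∫ x : E3, ρ x * ∫ y : E3, ρ y / ‖x - y‖)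
        ≤ ∫ x : E3, ρ x * C := by
          refine integral_mono_of_nonneg
            (Eventually.of_forall fun x => mul_nonneg (hpos x) (hinner_nonneg x))
            (hint.mul_const C)
            (Eventually.of_forall fun x => ?_)
          exact mul_le_mul_of_nonneg_left
            (inner_bound ρ hmeas hpos hint hint53 R hR x) (hpos x)
      _ = (∫ y : E3, ρ y) * C := by rw [integral_mul_const]
  rw [mul_assoc]
  linarith
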